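/- Let $\alpha \in (0,1)$, let $\theta = \frac{1}{2-\alpha} + \frac{2^{1-\alpha}\alpha^2 + \alpha - 2\alpha^2}{2(2-\alpha)(1+\overline{\rho})}$ with $\overline{\rho} = 4.7476114$, and let $\rho^*(\alpha)$ be the unique root in $(1,\infty)$ of $\frac{1+\rho}{\alpha} + \rho - \rho^{2-\alpha/2} + 2^{-\alpha}\alpha + \frac{1}{2} - \alpha = 0$. Then for all $z, y$ with $1 \leq z, y < \rho^*(\alpha)$, we have $q(z,y,\alpha) := 2\theta(2-\alpha) + \frac{2\alpha z - \alpha z^{2-\alpha/2}}{1+z} - \frac{\alpha y^{2-\alpha/2}}{1+y} > 0$. -/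

import Mathlib

open Set

open Real in

lemma expub (x : ℝ) (hx : |x| ≤ 1) : Real.exp x ≤ 1 + x + x^2/2 + 2/9*|x|^3 := by
  have h := Real.exp_bound hx (n := 3) (by norm_num)
  have h2 : ∑ m ∈ Finset.range 3, x ^ m / (m.factorial : ℝ) = 1 + x + x^2/2 := by
    simp [Finset.sum_range_succ]
  rw [h2] at h
  have h3 : ((3:ℕ).succ : ℝ) / ((3:ℕ).factorial * (3:ℕ)) = 2/9 := by norm_num [Nat.factorial]
  rw [h3] at h
  have := abs_le.mp h
  linarith [this.2]

lemma logr_lb : (1.5576350637:ℝ) ≤ Real.log 4.7476114 := by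
  have hp : (2:ℝ)^(36818:ℕ) ≤ (4.7476114:ℝ)^(16384:ℕ) := by
    rw [show (4.7476114:ℝ) = 23738057/5000000 by norm_num, div_pow, le_div_iff₀ (by positivity)]
    exact_mod_cast (by decide +kernel : 2^36818 * 5000000^16384 ≤ 23738057^16384)
  have h := Real.log_le_log (by positivity) hp
  rw [Real.log_pow, Real.log_pow] at h
  push_cast at h
  nlinarith [Real.log_two_gt_d9]

lemma logr_ub : Real.log 4.7476114 ≤ (1.5576773713:ℝ) := by
  have hp : (4.7476114:ℝ)^(16384:ℕ) ≤ (2:ℝ)^(36819:ℕ) := by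
    rw [show (4.7476114:ℝ) = 23738057/5000000 by norm_num, div_pow, div_le_iff₀ (by positivity)]
    exact_mod_cast (by decide +kernel : 23738057^16384 ≤ 2^36819 * 5000000^16384)
  have h := Real.log_le_log (by positivity) hp
  rw [Real.log_pow, Real.log_pow] at h
  push_cast at h
  nlinarith [Real.log_two_lt_d9]

lemma hK_bound : (4.7476114:ℝ)^((26029:ℝ)/16384) ≤ 11876960851/1000000000 := by
  have hr0 : (0:ℝ) < 4.7476114 := by norm_num
  apply le_of_pow_le_pow_left₀ (n := 16384) (by norm_num) (by norm_num)
  have he : ((4.7476114:ℝ)^((26029:ℝ)/16384))^(16384:ℕ) = (4.7476114:ℝ)^(26029:ℕ) := by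
    rw [← Real.rpow_natCast ((4.7476114:ℝ)^((26029:ℝ)/16384)) 16384,
        ← Real.rpow_mul hr0.le, ← Real.rpow_natCast (4.7476114:ℝ) 26029]
    norm_num
  rw [he]
  rw [show (4.7476114:ℝ) = 23738057/5000000 by norm_num, div_pow, div_pow,
    div_le_div_iff₀ (by positivity) (by positivity)]
  exact_mod_cast (by decide +kernel :
    23738057^26029 * 1000000000^16384 ≤ 11876960851^16384 * 5000000^26029)

lemma hV_bound : (706761941:ℝ)/1250000000 ≤ (2:ℝ)^(-((6739:ℝ)/8192)) := by
  have h2m : (2:ℝ)^((6739:ℝ)/8192) ≤ 1250000000/706761941 := by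
    apply le_of_pow_le_pow_left₀ (n := 8192) (by norm_num) (by norm_num)
    have he : ((2:ℝ)^((6739:ℝ)/8192))^(8192:ℕ) = (2:ℝ)^(6739:ℕ) := by
      rw [← Real.rpow_natCast ((2:ℝ)^((6739:ℝ)/8192)) 8192,
          ← Real.rpow_mul (by norm_num : (0:ℝ) ≤ 2), ← Real.rpow_natCast (2:ℝ) 6739]
      norm_num
    rw [he]
    rw [div_pow, le_div_iff₀ (by positivity)]
    exact_mod_cast (by decide +kernel : 2^6739 * 706761941^8192 ≤ 1250000000^8192)
  rw [Real.rpow_neg (by norm_num : (0:ℝ) ≤ 2)]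
  have hpos : (0:ℝ) < (2:ℝ)^((6739:ℝ)/8192) := Real.rpow_pos_of_pos (by norm_num) _
  have h := inv_anti₀ hpos h2m
  calc (706761941:ℝ)/1250000000 = (1250000000/706761941:ℝ)⁻¹ := by norm_num
    _ ≤ ((2:ℝ)^((6739:ℝ)/8192))⁻¹ := h

set_option maxHeartbeats 2000000 in
lemma gpos (a : ℝ) (ha0 : 0 < a) (ha1 : a < 1) :
    0 ≤ (1+(4.7476114:ℝ))/a + 4.7476114 - (4.7476114:ℝ)^(2 - a/2) + (2:ℝ)^(-a)*a + 1/2 - a := by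
  have hr0 : (0:ℝ) < 4.7476114 := by norm_num
  rcases le_or_gt a (8/25) with hsm | hbig
  · -- crude region (0, 0.32]
    have hup : (4.7476114:ℝ)^(2-a/2) ≤ (4.7476114:ℝ)^(((2:ℕ)):ℝ) :=
      Real.rpow_le_rpow_of_exponent_le (by norm_num) (by push_cast; linarith)
    rw [Real.rpow_natCast] at hup
    have hA : (1+(4.7476114:ℝ))/(8/25) ≤ (1+4.7476114)/a :=
      div_le_div_of_nonneg_left (by norm_num) ha0 hsm
    have hF0 : (0:ℝ) ≤ (2:ℝ)^(-a)*a := by positivity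
    nlinarith [hup, hA, hF0]
  · -- main region
    have hL1 := logr_lb
    have hL2 := logr_ub
    have hlpos : (0:ℝ) < Real.log 4.7476114 := by linarith
    have hsplit : (4.7476114:ℝ)^(2 - a/2)
        = (4.7476114:ℝ)^((26029:ℝ)/16384) * Real.exp (Real.log 4.7476114 * ((6739/8192 - a)/2)) := by
      rw [← Real.rpow_def_of_pos hr0, ← Real.rpow_add hr0]
      congr 1
      ring
    have hKb := hK_bound
    set K : ℝ := (4.7476114:ℝ)^((26029:ℝ)/16384)
    clear_value K
    set x : ℝ := Real.log 4.7476114 * ((6739/8192 - a)/2) with hxdef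
    have hxabs : |x| ≤ 1 := by
      rw [abs_le]
      constructor
      · nlinarith [mul_nonneg (sub_nonneg.2 hL1) (sub_nonneg.2 hbig.le)]
      · nlinarith [mul_nonneg (sub_nonneg.2 hL1) (sub_nonneg.2 ha1.le)]
    have he1 := expub x hxabs
    have hsplit2 : (2:ℝ)^(-a)
        = (2:ℝ)^(-((6739:ℝ)/8192)) * Real.exp (Real.log 2 * (6739/8192 - a)) := by
      rw [← Real.rpow_def_of_pos (by norm_num : (0:ℝ) < 2), ← Real.rpow_add (by norm_num : (0:ℝ) < 2)]
      congr 1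
      ring
    have hexplb : 1 + Real.log 2 * (6739/8192 - a) ≤ Real.exp (Real.log 2 * (6739/8192 - a)) := by
      have := Real.add_one_le_exp (Real.log 2 * (6739/8192 - a))
      linarith
    have hl2a := Real.log_two_gt_d9
    have hl2b := Real.log_two_lt_d9
    rcases le_total a (6739/8192) with hcase | hcase
    · -- LEFT case: 8/25 ≤ a ≤ m ; x ≥ 0
      have hxnn : 0 ≤ x := by
        apply mul_nonneg hlpos.le
        linarith
      have hxle : x ≤ 1.5576773713 * ((6739/8192 - a)/2) := by
        nlinarith [mul_nonneg (sub_nonneg.2 hL2) (sub_nonneg.2 hcase)]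
      have hxsq : x^2 ≤ (1.5576773713^2/4) * (a - 6739/8192)^2 := by
        nlinarith [sq_nonneg (6739/8192 - a), hlpos, hL2,
          mul_le_mul hL2 hL2 hlpos.le (by norm_num)]
      have hxcube : |x|^3 ≤ (1.5576773713^3/8) * (102939/204800) * (a - 6739/8192)^2 := by
        rw [abs_of_nonneg hxnn]
        have h3 := pow_le_pow_left₀ hxnn hxle 3
        nlinarith [h3, sq_nonneg (6739/8192 - a), mul_nonneg (sq_nonneg (6739/8192 - a)) (sub_nonneg.2 hbig.le)]
      have hpoly : 1 + x + x^2/2 + 2/9*|x|^3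
          ≤ 1 - 1.5576773713/2*(a - 6739/8192)
            + ((1.5576773713^2 + 1.5576773713^3*(102939/204800))/8)*(a - 6739/8192)^2 := by
        have habs3 : (0:ℝ) ≤ |x|^3 := by positivity
        linarith [hxle, hxsq, hxcube, sq_nonneg (a - 6739/8192)]
      have h5 : (4.7476114:ℝ)^(2 - a/2)
          ≤ 11876960851/1000000000 * (1 - 1.5576773713/2*(a - 6739/8192)
            + ((1.5576773713^2 + 1.5576773713^3*(102939/204800))/8)*(a - 6739/8192)^2) := by
        rw [hsplit]
        calc K * Real.exp x
            ≤ 11876960851/1000000000 * Real.exp x :=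
              mul_le_mul_of_nonneg_right hKb (Real.exp_pos x).le
          _ ≤ _ := mul_le_mul_of_nonneg_left (he1.trans hpoly) (by norm_num)
      have h1mt : 0 ≤ 1 + Real.log 2 * (6739/8192 - a) := by
        nlinarith [mul_nonneg (sub_nonneg.2 hl2a.le) (sub_nonneg.2 hcase)]
      have hF : 706761941/1250000000*(a - 0.6931471803*(a^2 - 6739/8192*a)) ≤ (2:ℝ)^(-a)*a := by
        rw [hsplit2]
        have e1 : (706761941/1250000000:ℝ) * (1 + Real.log 2 * (6739/8192 - a))
            ≤ 706761941/1250000000 * Real.exp (Real.log 2 * (6739/8192 - a)) :=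
          mul_le_mul_of_nonneg_left hexplb (by norm_num)
        have e2 : (706761941/1250000000:ℝ) * Real.exp (Real.log 2 * (6739/8192 - a))
            ≤ (2:ℝ)^(-((6739:ℝ)/8192)) * Real.exp (Real.log 2 * (6739/8192 - a)) :=
          mul_le_mul_of_nonneg_right hV_bound (Real.exp_pos _).le
        have e3 := mul_le_mul_of_nonneg_right (e1.trans e2) ha0.le
        have e4 : (706761941/1250000000:ℝ)*(a - 0.6931471803*(a^2 - 6739/8192*a))
            ≤ 706761941/1250000000 * (1 + Real.log 2 * (6739/8192 - a)) * a := by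
          have hp : 0 ≤ a*(6739/8192 - a)*(Real.log 2 - 0.6931471803) :=
            mul_nonneg (mul_nonneg ha0.le (by linarith)) (by linarith)
          nlinarith [hp]
        nlinarith [e3, e4]
      have hT1 : (1+4.7476114:ℝ)*(2*(8192/6739) - (67108864/45414121)*a
            + (549755813888/306045761419)*(a-6739/8192)^2) ≤ (1+4.7476114)/a := by
        rw [← sub_nonneg]
        have hid : (1+4.7476114:ℝ)/a - (1+4.7476114)*(2*(8192/6739) - (67108864/45414121)*a
            + (549755813888/306045761419)*(a-6739/8192)^2)
            = (1+4.7476114)*((a-6739/8192)^2*(6739/8192-a))*(549755813888/306045761419)/a := by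
          field_simp
          ring
        rw [hid]
        apply div_nonneg _ ha0.le
        exact mul_nonneg (mul_nonneg (by norm_num) (mul_nonneg (sq_nonneg _) (by linarith))) (by norm_num)
      nlinarith [h5, hF, hT1, sq_nonneg (a - 8226391547/10000000000), hcase, hbig.le]
    · -- RIGHT case: m ≤ a < 1 ; x ≤ 0
      have hxnp : x ≤ 0 := by
        apply mul_nonpos_of_nonneg_of_nonpos hlpos.le
        linarith
      have hxle : x ≤ -(1.5576350637/2)*(a - 6739/8192) := by
        nlinarith [mul_nonneg (sub_nonneg.2 hL1) (sub_nonneg.2 hcase)]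
      have hxsq : x^2 ≤ (1.5576773713^2/4) * (a - 6739/8192)^2 := by
        nlinarith [sq_nonneg (6739/8192 - a), hlpos, hL2,
          mul_le_mul hL2 hL2 hlpos.le (by norm_num)]
      have hxcube : |x|^3 ≤ (1.5576773713^3/8) * (1453/8192) * (a - 6739/8192)^2 := by
        rw [abs_of_nonpos hxnp]
        have hnxle : -x ≤ 1.5576773713 * ((a - 6739/8192)/2) := by
          nlinarith [mul_nonneg (sub_nonneg.2 hL2) (sub_nonneg.2 hcase)]
        have h3 := pow_le_pow_left₀ (by linarith : (0:ℝ) ≤ -x) hnxle 3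
        nlinarith [h3, sq_nonneg (a - 6739/8192), mul_nonneg (sq_nonneg (a - 6739/8192)) (by linarith : (0:ℝ) ≤ 1 - a)]
      have hpoly : 1 + x + x^2/2 + 2/9*|x|^3
          ≤ 1 - 1.5576350637/2*(a - 6739/8192)
            + ((1.5576773713^2 + 1.5576773713^3*(1453/8192))/8)*(a - 6739/8192)^2 := by
        linarith [hxle, hxsq, hxcube, sq_nonneg (a - 6739/8192)]
      have h5 : (4.7476114:ℝ)^(2 - a/2)
          ≤ 11876960851/1000000000 * (1 - 1.5576350637/2*(a - 6739/8192)
            + ((1.5576773713^2 + 1.5576773713^3*(1453/8192))/8)*(a - 6739/8192)^2) := by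
        rw [hsplit]
        calc K * Real.exp x
            ≤ 11876960851/1000000000 * Real.exp x :=
              mul_le_mul_of_nonneg_right hKb (Real.exp_pos x).le
          _ ≤ _ := mul_le_mul_of_nonneg_left (he1.trans hpoly) (by norm_num)
      have h1mt : 0 ≤ 1 + Real.log 2 * (6739/8192 - a) := by
        nlinarith [mul_nonneg (sub_nonneg.2 (le_of_lt hl2b)) (sub_nonneg.2 hcase)]
      have hF : 706761941/1250000000*(a - 0.6931471808*(a^2 - 6739/8192*a)) ≤ (2:ℝ)^(-a)*a := by
        rw [hsplit2]
        have e1 : (706761941/1250000000:ℝ) * (1 + Real.log 2 * (6739/8192 - a))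
            ≤ 706761941/1250000000 * Real.exp (Real.log 2 * (6739/8192 - a)) :=
          mul_le_mul_of_nonneg_left hexplb (by norm_num)
        have e2 : (706761941/1250000000:ℝ) * Real.exp (Real.log 2 * (6739/8192 - a))
            ≤ (2:ℝ)^(-((6739:ℝ)/8192)) * Real.exp (Real.log 2 * (6739/8192 - a)) :=
          mul_le_mul_of_nonneg_right hV_bound (Real.exp_pos _).le
        have e3 := mul_le_mul_of_nonneg_right (e1.trans e2) ha0.le
        have e4 : (706761941/1250000000:ℝ)*(a - 0.6931471808*(a^2 - 6739/8192*a))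
            ≤ 706761941/1250000000 * (1 + Real.log 2 * (6739/8192 - a)) * a := by
          have hp : 0 ≤ a*(a - 6739/8192)*(0.6931471808 - Real.log 2) :=
            mul_nonneg (mul_nonneg ha0.le (by linarith)) (by linarith)
          nlinarith [hp]
        nlinarith [e3, e4]
      have hT1 : (1+4.7476114:ℝ)*(2*(8192/6739) - (67108864/45414121)*a
            + (67108864/45414121)*(a-6739/8192)^2) ≤ (1+4.7476114)/a := by
        rw [← sub_nonneg]
        have hid : (1+4.7476114:ℝ)/a - (1+4.7476114)*(2*(8192/6739) - (67108864/45414121)*a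
            + (67108864/45414121)*(a-6739/8192)^2)
            = (1+4.7476114)*((a-6739/8192)^2*(1-a))*(67108864/45414121)/a := by
          field_simp
          ring
        rw [hid]
        apply div_nonneg _ ha0.le
        exact mul_nonneg (mul_nonneg (by norm_num) (mul_nonneg (sq_nonneg _) (by linarith))) (by norm_num)
      nlinarith [h5, hF, hT1, sq_nonneg (a - 8226750191/10000000000), hcase, ha1.le]

set_option maxHeartbeats 1000000 in
lemma rhostar_ge (α ρstar : ℝ) (hα0 : 0 < α) (hα1 : α < 1) (hρ : 1 < ρstar)
    (hgpos : 0 ≤ (1+(4.7476114:ℝ))/α + 4.7476114 - (4.7476114:ℝ)^(2 - α/2) + (2:ℝ)^(-α)*α + 1/2 - α)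
    (huniq : ∀ ρ : ℝ, 1 < ρ →
      (1+ρ)/α + ρ - ρ ^ (2 - α/2) + 2^(-α) * α + 1/2 - α = 0 → ρ = ρstar) :
    (4.7476114:ℝ) ≤ ρstar := by
  rcases eq_or_lt_of_le hgpos with heq | hlt
  · have h := huniq 4.7476114 (by norm_num) (by linarith)
    linarith
  · set M : ℝ := 16/α^2 with hMdef
    have hα2 : (0:ℝ) < α^2 := by positivity
    have hM16 : (16:ℝ) ≤ M := by
      rw [hMdef, le_div_iff₀ hα2]
      nlinarith
    have hM1 : (1:ℝ) ≤ M := by linarith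
    have hrM : (4.7476114:ℝ) ≤ M := by linarith
    -- f M < 0
    have hfM : (1+M)/α + M - M ^ (2 - α/2) + 2^(-α) * α + 1/2 - α < 0 := by
      have hMpow : M^((3:ℝ)/2) ≤ M^(2-α/2) :=
        Real.rpow_le_rpow_of_exponent_le hM1 (by linarith)
      have hMval : M^((3:ℝ)/2) = 64/α^3 := by
        have h4a : (0:ℝ) < 4/α := by positivity
        have hMeq : M = (4/α)^(2:ℕ) := by
          rw [hMdef, div_pow]; norm_num
        rw [hMeq, ← Real.rpow_natCast (4/α) 2, ← Real.rpow_mul h4a.le]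
        norm_num
        rw [div_pow]
        norm_num
      have h2a : (2:ℝ)^(-α)*α ≤ 1 := by
        have h1 : (2:ℝ)^(-α) ≤ 1 :=
          Real.rpow_le_one_of_one_le_of_nonpos (by norm_num) (by linarith)
        nlinarith [Real.rpow_pos_of_pos (by norm_num : (0:ℝ)<2) (-α)]
      have hkey : (1+M)/α + M - 64/α^3 + 3/2 - α < 0 := by
        have hid : (1+M)/α + M - 64/α^3 + 3/2 - α
            = (α^2 + 16*α + 16 - 64 + (3/2)*α^3 - α^4)/α^3 := by
          rw [hMdef]; field_simp; ring
        rw [hid]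
        apply div_neg_of_neg_of_pos _ (by positivity)
        nlinarith
      linarith [hMval ▸ hMpow]
    -- continuity
    have hcont : ContinuousOn (fun ρ : ℝ => (1+ρ)/α + ρ - ρ ^ (2 - α/2) + 2^(-α) * α + 1/2 - α)
        (Set.Icc (4.7476114:ℝ) M) := by
      have c2 : ContinuousOn (fun ρ:ℝ => ρ ^ (2 - α/2)) (Set.Icc (4.7476114:ℝ) M) := by
        apply ContinuousOn.rpow_const continuousOn_id
        intro x hx
        left
        have := hx.1
        positivity
      have c1 : ContinuousOn (fun ρ:ℝ => (1+ρ)/α + ρ) (Set.Icc (4.7476114:ℝ) M) :=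
        (((continuous_const.add continuous_id).div_const α).add continuous_id).continuousOn
      exact (((c1.sub c2).add continuousOn_const).add continuousOn_const).sub continuousOn_const
    have hmem : (0:ℝ) ∈ Set.Icc ((1+M)/α + M - M ^ (2 - α/2) + 2^(-α) * α + 1/2 - α)
        ((1+(4.7476114:ℝ))/α + 4.7476114 - (4.7476114:ℝ)^(2 - α/2) + (2:ℝ)^(-α)*α + 1/2 - α) :=
      ⟨hfM.le, hlt.le⟩
    obtain ⟨ρ₀, hρ₀mem, hρ₀⟩ := intermediate_value_Icc' hrM hcont hmem
    have hρ₀star : ρ₀ = ρstar := huniq ρ₀ (by have := hρ₀mem.1; linarith) hρ₀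
    linarith [hρ₀mem.1, hρ₀star ▸ hρ₀mem.1]


set_option maxHeartbeats 1000000 in
theorem stmt_3 (α ρstar : ℝ) (hα : α ∈ Set.Ioo (0:ℝ) 1)
    (hρ : 1 < ρstar)
    (hroot : (1+ρstar)/α + ρstar - ρstar ^ (2 - α/2) + 2^(-α) * α + 1/2 - α = 0)
    (huniq : ∀ ρ : ℝ, 1 < ρ →
      (1+ρ)/α + ρ - ρ ^ (2 - α/2) + 2^(-α) * α + 1/2 - α = 0 → ρ = ρstar)
    (ρbar θ : ℝ) (hρbar : ρbar = 4.7476114)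
    (hθ : θ = 1/(2-α) + (2^(1-α) * α^2 + α - 2*α^2) / (2*(2-α)*(1+ρbar))) :
    ∀ z y : ℝ, 1 ≤ z → z < ρstar → 1 ≤ y → y < ρstar →
      0 < 2*θ*(2-α) + (2*α*z - α * z ^ (2 - α/2)) / (1+z) - α * y ^ (2 - α/2) / (1+y) := by
  obtain ⟨hα0, hα1⟩ := hα
  subst hρbar
  have hρr : (4.7476114:ℝ) ≤ ρstar :=
    rhostar_ge α ρstar hα0 hα1 hρ (gpos α hα0 hα1) huniq
  intro z y hz1 hz2 hy1 hy2
  have hρ0 : (0:ℝ) < ρstar := by linarith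
  have hz0 : (0:ℝ) < z := by linarith
  have hy0 : (0:ℝ) < y := by linarith
  have h1z : (0:ℝ) < 1 + z := by linarith
  have h1y : (0:ℝ) < 1 + y := by linarith
  have h1ρ : (0:ℝ) < 1 + ρstar := by linarith
  have hβ1 : (3:ℝ)/2 ≤ 2 - α/2 := by linarith
  -- C monotone
  have hCexp : y ^ (1-α/2) < ρstar ^ (1-α/2) := Real.rpow_lt_rpow hy0.le hy2 (by linarith)
  have hCfrac : y/(1+y) ≤ ρstar/(1+ρstar) := by
    rw [div_le_div_iff₀ h1y h1ρ]; nlinarith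
  have ey : y ^ (2-α/2) / (1+y) = y^(1-α/2) * (y/(1+y)) := by
    rw [show (2-α/2) = (1-α/2) + 1 by ring, Real.rpow_add hy0, Real.rpow_one]; ring
  have eρ : ρstar ^ (2-α/2) / (1+ρstar) = ρstar^(1-α/2) * (ρstar/(1+ρstar)) := by
    rw [show (2-α/2) = (1-α/2) + 1 by ring, Real.rpow_add hρ0, Real.rpow_one]; ring
  have hC : y ^ (2-α/2) / (1+y) < ρstar ^ (2-α/2) / (1+ρstar) := by
    rw [ey, eρ]
    exact mul_lt_mul hCexp hCfrac (div_pos hy0 h1y) (Real.rpow_pos_of_pos hρ0 _).le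
  have hCα : α * y ^ (2-α/2) / (1+y) < α * ρstar ^ (2-α/2) / (1+ρstar) := by
    rw [mul_div_assoc, mul_div_assoc]
    exact mul_lt_mul_of_pos_left hC hα0
  -- B monotone
  have hB : α*(2*ρstar - ρstar ^ (2-α/2))/(1+ρstar) ≤ α*(2*z - z ^ (2-α/2))/(1+z) := by
    rw [div_le_div_iff₀ h1ρ h1z]
    rcases le_or_gt (z ^ (2-α/2)) (2*z) with hcz | hcz
    · have hρ12 : (2:ℝ) ≤ ρstar ^ ((1:ℝ)/2) := by
        have h4 : (4:ℝ)^((1:ℝ)/2) ≤ ρstar^((1:ℝ)/2) :=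
          Real.rpow_le_rpow (by norm_num) (by linarith) (by norm_num)
        have h42 : (4:ℝ)^((1:ℝ)/2) = 2 := by
          rw [show (4:ℝ) = 2^(2:ℕ) by norm_num, ← Real.rpow_natCast 2 2,
            ← Real.rpow_mul (by norm_num : (0:ℝ) ≤ 2)]
          norm_num
        linarith
      have hρ32 : 2*ρstar ≤ ρstar ^ ((3:ℝ)/2) := by
        have he : ρstar ^ ((3:ℝ)/2) = ρstar * ρstar^((1:ℝ)/2) := by
          rw [show (3:ℝ)/2 = 1 + 1/2 by ring, Real.rpow_add hρ0, Real.rpow_one]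
        rw [he]; nlinarith
      have hρβ3 : ρstar ^ ((3:ℝ)/2) ≤ ρstar ^ (2-α/2) :=
        Real.rpow_le_rpow_of_exponent_le (by linarith) hβ1
      have hzn : 0 ≤ α*(2*z - z^(2-α/2)) := mul_nonneg hα0.le (by linarith)
      nlinarith [mul_nonneg (mul_nonneg hα0.le (by linarith : (0:ℝ) ≤ ρstar^(2-α/2) - 2*ρstar)) h1z.le,
        mul_nonneg hzn h1ρ.le]
    · have hzβ1 : z ^ (2-α/2) = z * z^(1-α/2) := by
        rw [show (2-α/2) = 1 + (1-α/2) by ring, Real.rpow_add hz0, Real.rpow_one]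
      have h2ltz : 2 < z ^ (1-α/2) := by
        have h' : z*2 < z*z^(1-α/2) := by rw [← hzβ1]; linarith
        exact lt_of_mul_lt_mul_left h' hz0.le
      have hsnn : (0:ℝ) ≤ (ρstar - z)/z := div_nonneg (by linarith) hz0.le
      have hBer := one_add_mul_self_le_rpow_one_add
        (by linarith : (-1:ℝ) ≤ (ρstar - z)/z) (by linarith : (1:ℝ) ≤ 2-α/2)
      have heq1 : (1 + (ρstar - z)/z) = ρstar/z := by field_simp; ring
      rw [heq1, Real.div_rpow hρ0.le hz0.le] at hBer
      have hzβpos : (0:ℝ) < z^(2-α/2) := Real.rpow_pos_of_pos hz0 _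
      have hBer2 : z^(2-α/2) + (2-α/2)*((ρstar - z))*z^(1-α/2) ≤ ρstar^(2-α/2) := by
        have h := mul_le_mul_of_nonneg_right hBer hzβpos.le
        rw [div_mul_cancel₀ _ (ne_of_gt hzβpos)] at h
        calc z^(2-α/2) + (2-α/2)*((ρstar - z))*z^(1-α/2)
            = (1 + (2-α/2)*((ρstar - z)/z))*z^(2-α/2) := by
              rw [hzβ1]; field_simp
          _ ≤ ρstar^(2-α/2) := h
      have hρβ1 : z^(1-α/2) ≤ ρstar^(1-α/2) := Real.rpow_le_rpow hz0.le hz2.le (by linarith)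
      have hρβz : ρstar ^ (2-α/2) = ρstar * ρstar^(1-α/2) := by
        rw [show (2-α/2) = 1 + (1-α/2) by ring, Real.rpow_add hρ0, Real.rpow_one]
      have h3 : 3*(ρstar - z) ≤ (2-α/2)*(ρstar - z)*z^(1-α/2) := by
        nlinarith [mul_nonneg (by linarith : (0:ℝ) ≤ 2-α/2-3/2)
          (by linarith : (0:ℝ) ≤ z^(1-α/2) - 2), hz2.le]
      have hcross : 0 ≤ z*ρstar*(ρstar^(1-α/2) - z^(1-α/2)) :=
        mul_nonneg (mul_nonneg hz0.le hρ0.le) (by linarith)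
      have hinner : (2*ρstar - ρstar^(2-α/2))*(1+z) ≤ (2*z - z^(2-α/2))*(1+ρstar) := by
        nlinarith [hBer2, h3, hcross, hzβ1, hρβz]
      nlinarith [mul_le_mul_of_nonneg_left hinner hα0.le]
  -- θ arithmetic
  have h2ne : (2:ℝ) - α ≠ 0 := by intro h; linarith
  have hθval : 2*θ*(2-α) = 2 + (2^(1-α)*α^2 + α - 2*α^2)/5.7476114 := by
    rw [hθ, show (1:ℝ)+4.7476114 = 5.7476114 by norm_num]; field_simp
  have h2pow : (2:ℝ)^(1-α) = 2 * 2^(-α) := by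
    rw [show (1-α) = 1 + (-α) by ring, Real.rpow_add (by norm_num : (0:ℝ)<2), Real.rpow_one]
  have hN : 0 ≤ 2^(1-α)*α^2 + α - 2*α^2 := by
    have h1 : (1:ℝ) ≤ (2:ℝ)^(1-α) := by
      have h := Real.rpow_le_rpow_of_exponent_le (by norm_num : (1:ℝ) ≤ 2)
        (by linarith : (0:ℝ) ≤ 1-α)
      rwa [Real.rpow_zero] at h
    nlinarith [mul_le_mul_of_nonneg_right h1 (sq_nonneg α), sq_nonneg α]
  have hρβval : ρstar ^ (2-α/2) = (1+ρstar)/α + ρstar + 2^(-α)*α + 1/2 - α := by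
    linarith [hroot]
  have hsum : α*(2*ρstar - ρstar^(2-α/2))/(1+ρstar) - α*ρstar^(2-α/2)/(1+ρstar)
      = -2 - (2^(1-α)*α^2 + α - 2*α^2)/(1+ρstar) := by
    rw [hρβval, h2pow]
    field_simp
    ring
  have hNdiv : (2^(1-α)*α^2 + α - 2*α^2)/(1+ρstar) ≤ (2^(1-α)*α^2 + α - 2*α^2)/5.7476114 :=
    div_le_div_of_nonneg_left hN (by norm_num) (by linarith)
  have step1 : 0 ≤ 2*θ*(2-α) + (α*(2*ρstar - ρstar^(2-α/2))/(1+ρstar)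
      - α*ρstar^(2-α/2)/(1+ρstar)) := by
    rw [hθval, hsum]
    linarith [hNdiv]
  have hgz : (2*α*z - α*z^(2-α/2))/(1+z) = α*(2*z - z^(2-α/2))/(1+z) := by ring_nf
  rw [hgz]
  linarith [step1, hB, hCα]
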